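/- Let T be the set of all f ∈ Λ whose support is cofinite (X \ Supp(f) is finite). Then T is a multiplicative set and the localization T⁻¹Λ is isomorphic to Λ/𝔉(Λ), where 𝔉(Λ) is the ideal of elements with finite support. -/

import Mathlib

/-- The support of an element of a product of fields. -/
def Supp {X : Type*} {K : X → Type*} [∀ x, Field (K x)] (f : Π x, K x) : Set X :=
  {x | f x ≠ 0}

/-- The localization of Λ at the multiplicative set of cofinitely supported
elements is the quotient of Λ by the ideal of finitely supported elements. -/
theorem localization_cofinite_iso {X : Type*} {K : X → Type*} [∀ x, Field (K x)] :
    ∃ (T : Submonoid (Π x, K x)) (F : Ideal (Π x, K x)),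
      (T : Set (Π x, K x)) = {f | ((Supp f)ᶜ : Set X).Finite} ∧
      (F : Set (Π x, K x)) = {f | (Supp f).Finite} ∧
      Nonempty (Localization T ≃+* ((Π x, K x) ⧸ F)) := by
  classical
  let T : Submonoid (Π x, K x) :=
    { carrier := {f | ((Supp f)ᶜ : Set X).Finite}
      mul_mem' := by
        intro a b ha hb
        refine (ha.union hb).subset ?_
        intro x hx
        simp only [Set.mem_compl_iff, Supp, Set.mem_setOf_eq, not_not, Set.mem_union] at hx ⊢
        exact mul_eq_zero.mp hx
      one_mem' := by
        show ((Supp (1 : Π x, K x))ᶜ : Set X).Finite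
        convert Set.finite_empty
        ext x
        simp [Supp] }
  let F : Ideal (Π x, K x) :=
    { carrier := {f | (Supp f).Finite}
      add_mem' := by
        intro a b ha hb
        refine (ha.union hb).subset ?_
        intro x hx
        simp only [Supp, Set.mem_setOf_eq, Set.mem_union] at hx ⊢
        by_contra h
        push_neg at h
        exact hx (by simp [Pi.add_apply, h.1, h.2])
      zero_mem' := by
        show (Supp (0 : Π x, K x)).Finite
        convert Set.finite_empty
        ext x
        simp [Supp]
      smul_mem' := by
        intro c f hf
        refine hf.subset ?_
        intro x hx
        simp only [Supp, Set.mem_setOf_eq] at hx ⊢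
        intro h
        exact hx (by simp [h]) }
  refine ⟨T, F, rfl, rfl, ?_⟩
  haveI : IsLocalization T ((Π x, K x) ⧸ F) := by
    constructor
    constructor
    · rintro ⟨t, ht⟩
      refine isUnit_iff_exists.mpr ⟨Ideal.Quotient.mk F (fun x => (t x)⁻¹), ?_, ?_⟩ <;>
      · rw [Ideal.Quotient.algebraMap_eq, ← map_mul, ← map_one (Ideal.Quotient.mk F),
          Ideal.Quotient.mk_eq_mk_iff_sub_mem]
        refine ht.subset ?_
        intro x hx
        simp only [Supp, Set.mem_setOf_eq, Set.mem_compl_iff, Pi.sub_apply, Pi.mul_apply,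
          Pi.one_apply] at hx ⊢
        intro h
        apply hx
        first
        | simp [mul_inv_cancel₀ h]
        | simp [inv_mul_cancel₀ h]
    · intro z
      obtain ⟨f, rfl⟩ := Ideal.Quotient.mk_surjective z
      refine ⟨⟨f, 1⟩, ?_⟩
      simp [Ideal.Quotient.algebraMap_eq]
    · intro a b h
      rw [Ideal.Quotient.algebraMap_eq, Ideal.Quotient.mk_eq_mk_iff_sub_mem] at h
      refine ⟨⟨fun x => if a x - b x = 0 then 1 else 0, ?_⟩, ?_⟩
      · refine h.subset ?_
        intro x hx
        simp only [Supp, Set.mem_setOf_eq, Set.mem_compl_iff, not_not] at hx ⊢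
        have hab : a x - b x ≠ 0 := by
          intro h0; rw [if_pos h0] at hx; exact one_ne_zero hx
        simpa using hab
      · ext x
        by_cases hab : a x - b x = 0
        · have : a x = b x := by linear_combination hab
          simp [Pi.mul_apply, this]
        · simp [Pi.mul_apply, hab]
  exact ⟨(IsLocalization.algEquiv T (Localization T) ((Π x, K x) ⧸ F)).toRingEquiv⟩
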